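/- On R^4, define P with nonzero entries P^{13} = -p14 e^{x3} sin(x4), P^{14} = p14 e^{x3} cos(x4), P^{23} = -p14 e^{x3} cos(x4), P^{24} = -p14 e^{x3} sin(x4), and P' with nonzero entries P'^{13} = e^{x3}(-α cos x4 + β sin x4), P'^{14} = -e^{x3}(β cos x4 + α sin x4), P'^{23} = e^{x3}(β cos x4 + α sin x4), P'^{24} = e^{x3}(-α cos x4 + β sin x4), where α = a54 x3 - a64 x4, β = a64 x3 + a54 x4, and p14, a54, a64 are real constants. Then P and P' are compatible Poisson structures: [P,P] = [P',P'] = [P,P'] = 0. -/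

import Mathlib

open scoped BigOperators

noncomputable def pd {m : ℕ} (μ : Fin m) (f : (Fin m → ℝ) → ℝ) (x : Fin m → ℝ) : ℝ :=
  fderiv ℝ f x (Pi.single μ 1)

/-- Poisson bracket associated to a bivector field `P`. -/
noncomputable def pbrk {m : ℕ} (P : (Fin m → ℝ) → Fin m → Fin m → ℝ)
    (f g : (Fin m → ℝ) → ℝ) (x : Fin m → ℝ) : ℝ :=
  ∑ μ, ∑ ν, P x μ ν * pd μ f x * pd ν g x

/-- Schouten bracket `[P,P]^{λμν}`. -/
noncomputable def schouten {m : ℕ} (P : (Fin m → ℝ) → Fin m → Fin m → ℝ)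
    (l μ ν : Fin m) (x : Fin m → ℝ) : ℝ :=
  ∑ ρ, (P x ρ l * pd ρ (fun y => P y μ ν) x
      + P x ρ ν * pd ρ (fun y => P y l μ) x
      + P x ρ μ * pd ρ (fun y => P y ν l) x)

/-- Mixed Schouten bracket `[P,Q]^{λμν}`. -/
noncomputable def schoutenMixed {m : ℕ} (P Q : (Fin m → ℝ) → Fin m → Fin m → ℝ)
    (l μ ν : Fin m) (x : Fin m → ℝ) : ℝ :=
  ∑ ρ, (P x ρ l * pd ρ (fun y => Q y μ ν) x + Q x ρ l * pd ρ (fun y => P y μ ν) x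
      + P x ρ ν * pd ρ (fun y => Q y l μ) x + Q x ρ ν * pd ρ (fun y => P y l μ) x
      + P x ρ μ * pd ρ (fun y => Q y ν l) x + Q x ρ μ * pd ρ (fun y => P y ν l) x)

/-- The Poisson bivector `P` on the group `A_{4,12}`. -/
noncomputable def P412 (p14 : ℝ) : (Fin 4 → ℝ) → Fin 4 → Fin 4 → ℝ :=
  fun x μ ν =>
    let A := -(p14 * Real.exp (x 2) * Real.sin (x 3))
    let B := p14 * Real.exp (x 2) * Real.cos (x 3)
    let C := -(p14 * Real.exp (x 2) * Real.cos (x 3))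
    let D := -(p14 * Real.exp (x 2) * Real.sin (x 3))
    !![0, 0, A, B;
       0, 0, C, D;
       -A, -C, 0, 0;
       -B, -D, 0, 0] μ ν

/-- The Poisson bivector `P'` on the group `A_{4,12}`, with
`α = a54 x3 - a64 x4` and `β = a64 x3 + a54 x4`. -/
noncomputable def P412' (a54 a64 : ℝ) : (Fin 4 → ℝ) → Fin 4 → Fin 4 → ℝ :=
  fun x μ ν =>
    let α := a54 * x 2 - a64 * x 3
    let β := a64 * x 2 + a54 * x 3
    let A := Real.exp (x 2) * (-α * Real.cos (x 3) + β * Real.sin (x 3))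
    let B := -(Real.exp (x 2) * (β * Real.cos (x 3) + α * Real.sin (x 3)))
    let C := Real.exp (x 2) * (β * Real.cos (x 3) + α * Real.sin (x 3))
    let D := Real.exp (x 2) * (-α * Real.cos (x 3) + β * Real.sin (x 3))
    !![0, 0, A, B;
       0, 0, C, D;
       -A, -C, 0, 0;
       -B, -D, 0, 0] μ ν


section Aux

lemma pd_base (c1 c2 c3 d1 d2 d3 : ℝ) (f : (Fin 4 → ℝ) → ℝ)
    (hf : f = fun y => Real.exp (y 2) * ((c1 + c2 * y 2 + c3 * y 3) * Real.sin (y 3)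
        + (d1 + d2 * y 2 + d3 * y 3) * Real.cos (y 3)))
    (ρ : Fin 4) (x : Fin 4 → ℝ) :
    pd ρ f x =
      (Pi.single ρ 1 : Fin 4 → ℝ) 2 * (Real.exp (x 2) * ((c1 + c2 * x 2 + c3 * x 3 + c2) * Real.sin (x 3)
          + (d1 + d2 * x 2 + d3 * x 3 + d2) * Real.cos (x 3)))
    + (Pi.single ρ 1 : Fin 4 → ℝ) 3 * (Real.exp (x 2) * ((c3 - (d1 + d2 * x 2 + d3 * x 3)) * Real.sin (x 3)
          + (d3 + (c1 + c2 * x 2 + c3 * x 3)) * Real.cos (x 3))) := by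
  subst hf
  have h2 : HasFDerivAt (fun y : Fin 4 → ℝ => y 2)
      (ContinuousLinearMap.proj (R := ℝ) (φ := fun _ : Fin 4 => ℝ) 2) x := hasFDerivAt_apply 2 x
  have h3 : HasFDerivAt (fun y : Fin 4 → ℝ => y 3)
      (ContinuousLinearMap.proj (R := ℝ) (φ := fun _ : Fin 4 => ℝ) 3) x := hasFDerivAt_apply 3 x
  have hF : HasFDerivAt (fun y : Fin 4 → ℝ => Real.exp (y 2) * ((c1 + c2 * y 2 + c3 * y 3) * Real.sin (y 3)
        + (d1 + d2 * y 2 + d3 * y 3) * Real.cos (y 3))) _ x :=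
    h2.exp.mul (((((hasFDerivAt_const c1 x).add (h2.const_mul c2)).add (h3.const_mul c3)).mul h3.sin).add
      ((((hasFDerivAt_const d1 x).add (h2.const_mul d2)).add (h3.const_mul d3)).mul h3.cos))
  rw [pd, hF.fderiv]
  simp only [ContinuousLinearMap.add_apply, ContinuousLinearMap.smul_apply,
    ContinuousLinearMap.proj_apply, ContinuousLinearMap.zero_apply, smul_eq_mul, Pi.add_apply]
  ring

noncomputable def Pc1 (p14 : ℝ) : Fin 4 → Fin 4 → ℝ :=
  !![0, 0, -p14, 0; 0, 0, 0, -p14; p14, 0, 0, 0; 0, p14, 0, 0]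
noncomputable def Pd1 (p14 : ℝ) : Fin 4 → Fin 4 → ℝ :=
  !![0, 0, 0, p14; 0, 0, -p14, 0; 0, p14, 0, 0; -p14, 0, 0, 0]
noncomputable def Qc2 (a54 a64 : ℝ) : Fin 4 → Fin 4 → ℝ :=
  !![0, 0, a64, -a54; 0, 0, a54, a64; -a64, -a54, 0, 0; a54, -a64, 0, 0]
noncomputable def Qc3 (a54 a64 : ℝ) : Fin 4 → Fin 4 → ℝ :=
  !![0, 0, a54, a64; 0, 0, -a64, a54; -a54, a64, 0, 0; -a64, -a54, 0, 0]
noncomputable def Qd2 (a54 a64 : ℝ) : Fin 4 → Fin 4 → ℝ :=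
  !![0, 0, -a54, -a64; 0, 0, a64, -a54; a54, -a64, 0, 0; a64, a54, 0, 0]
noncomputable def Qd3 (a54 a64 : ℝ) : Fin 4 → Fin 4 → ℝ :=
  !![0, 0, a64, -a54; 0, 0, a54, a64; -a64, -a54, 0, 0; a54, -a64, 0, 0]

lemma pdP412 (p14 : ℝ) (ρ μ ν : Fin 4) (x : Fin 4 → ℝ) :
    pd ρ (fun y => P412 p14 y μ ν) x =
      (Pi.single ρ 1 : Fin 4 → ℝ) 2 * (Real.exp (x 2) * ((Pc1 p14 μ ν + 0 * x 2 + 0 * x 3 + 0) * Real.sin (x 3)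
          + (Pd1 p14 μ ν + 0 * x 2 + 0 * x 3 + 0) * Real.cos (x 3)))
    + (Pi.single ρ 1 : Fin 4 → ℝ) 3 * (Real.exp (x 2) * ((0 - (Pd1 p14 μ ν + 0 * x 2 + 0 * x 3)) * Real.sin (x 3)
          + (0 + (Pc1 p14 μ ν + 0 * x 2 + 0 * x 3)) * Real.cos (x 3))) := by
  fin_cases μ <;> fin_cases ν <;>
    refine pd_base _ _ _ _ _ _ _ ?_ ρ x <;> funext y <;>
      simp [P412, Pc1, Pd1, Matrix.vecHead, Matrix.vecTail] <;> ring

lemma pdP412' (a54 a64 : ℝ) (ρ μ ν : Fin 4) (x : Fin 4 → ℝ) :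
    pd ρ (fun y => P412' a54 a64 y μ ν) x =
      (Pi.single ρ 1 : Fin 4 → ℝ) 2 * (Real.exp (x 2) * ((0 + Qc2 a54 a64 μ ν * x 2 + Qc3 a54 a64 μ ν * x 3 + Qc2 a54 a64 μ ν) * Real.sin (x 3)
          + (0 + Qd2 a54 a64 μ ν * x 2 + Qd3 a54 a64 μ ν * x 3 + Qd2 a54 a64 μ ν) * Real.cos (x 3)))
    + (Pi.single ρ 1 : Fin 4 → ℝ) 3 * (Real.exp (x 2) * ((Qc3 a54 a64 μ ν - (0 + Qd2 a54 a64 μ ν * x 2 + Qd3 a54 a64 μ ν * x 3)) * Real.sin (x 3)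
          + (Qd3 a54 a64 μ ν + (0 + Qc2 a54 a64 μ ν * x 2 + Qc3 a54 a64 μ ν * x 3)) * Real.cos (x 3))) := by
  fin_cases μ <;> fin_cases ν <;>
    refine pd_base _ _ _ _ _ _ _ ?_ ρ x <;> funext y <;>
      simp [P412', Qc2, Qc3, Qd2, Qd3, Matrix.vecHead, Matrix.vecTail] <;> ring

end Aux


set_option maxHeartbeats 2000000 in
lemma part1 (p14 : ℝ) : ∀ x l μ ν, schouten (P412 p14) l μ ν x = 0 := by
  intro x l μ ν
  fin_cases l <;> fin_cases μ <;> fin_cases ν <;>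
    simp only [schouten, Fin.sum_univ_four, pdP412] <;>
    simp [P412, Pc1, Pd1, Matrix.vecHead, Matrix.vecTail, Pi.single_apply] <;>
    ring

set_option maxHeartbeats 4000000 in
lemma part2 (a54 a64 : ℝ) : ∀ x l μ ν, schouten (P412' a54 a64) l μ ν x = 0 := by
  intro x l μ ν
  fin_cases l <;> fin_cases μ <;> fin_cases ν <;>
    simp only [schouten, Fin.sum_univ_four, pdP412'] <;>
    simp [P412', Qc2, Qc3, Qd2, Qd3, Matrix.vecHead, Matrix.vecTail, Pi.single_apply] <;>
    ring

set_option maxHeartbeats 4000000 in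
lemma part3 (p14 a54 a64 : ℝ) : ∀ x l μ ν, schoutenMixed (P412 p14) (P412' a54 a64) l μ ν x = 0 := by
  intro x l μ ν
  fin_cases l <;> fin_cases μ <;> fin_cases ν <;>
    simp only [schoutenMixed, Fin.sum_univ_four, pdP412, pdP412'] <;>
    simp [P412, P412', Pc1, Pd1, Qc2, Qc3, Qd2, Qd3, Matrix.vecHead, Matrix.vecTail, Pi.single_apply] <;>
    ring

theorem A412_compatible (p14 a54 a64 : ℝ) :
    (∀ x l μ ν, schouten (P412 p14) l μ ν x = 0) ∧
    (∀ x l μ ν, schouten (P412' a54 a64) l μ ν x = 0) ∧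
    (∀ x l μ ν, schoutenMixed (P412 p14) (P412' a54 a64) l μ ν x = 0) :=
  ⟨part1 p14, part2 a54 a64, part3 p14 a54 a64⟩
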